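/- For every ε > 0 there exists n₀ such that for all n ≥ n₀ the following holds: every simple graph G on a vertex set V of size n admits a family of bicliques (X₁,Y₁), …, (X_q,Y_q) — where Xᵢ, Yᵢ ⊆ V are disjoint nonempty sets such that every pair {x,y} with x ∈ Xᵢ, y ∈ Yᵢ is an edge of G — whose edge sets {{x,y} : x ∈ Xᵢ, y ∈ Yᵢ} are pairwise disjoint and have union equal to the edge set of G, and which satisfies Σᵢ(|Xᵢ| + |Yᵢ|) ≤ (1+ε)·n²/(2·ln n). -/

import Mathlib

open Finset

namespace CES

variable {V : Type} [Fintype V] [DecidableEq V] (G : SimpleGraph V) [DecidableRel G.Adj]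
variable (idx : V → ℕ) (k : ℕ)
set_option linter.unusedSectionVars false
set_option linter.unusedVariables false

/-- chunk `i` : vertices whose index has quotient `i` by `k`. -/
def Ch (i : ℕ) : Finset V := univ.filter fun v => idx v / k = i
/-- vertices in later chunks than `i`. -/
def Bl (i : ℕ) : Finset V := univ.filter fun v => i < idx v / k
/-- neighborhood of `y` inside chunk `i`. -/
def Nb (i : ℕ) (y : V) : Finset V := G.neighborFinset y ∩ Ch idx k i
/-- later vertices whose chunk-`i` neighborhood is exactly `s`. -/
def BS (i : ℕ) (s : Finset V) : Finset V := (Bl idx k i).filter fun y => Nb G idx k i y = s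

def Pcross (n : ℕ) : Finset (Finset V × Finset V) :=
  (range n).biUnion fun i =>
    (((Ch idx k i).powerset.filter Finset.Nonempty).image fun s => (s, BS G idx k i s)).filter
      fun p => p.2.Nonempty

def Psingle : Finset (Finset V × Finset V) :=
  ((univ ×ˢ univ).filter fun p : V × V =>
      G.Adj p.1 p.2 ∧ idx p.1 < idx p.2 ∧ idx p.1 / k = idx p.2 / k).image
    fun p => ({p.1}, {p.2})

def Pall (n : ℕ) : Finset (Finset V × Finset V) := Pcross G idx k n ∪ Psingle G idx k

/-- the canonical biclique containing edge `{x,y}` (with `idx x < idx y`). -/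
def D (x y : V) : Finset V × Finset V :=
  if idx x / k = idx y / k then ({x}, {y})
  else (Nb G idx k (idx x / k) y, BS G idx k (idx x / k) (Nb G idx k (idx x / k) y))

lemma mem_Ch {v : V} {i : ℕ} : v ∈ Ch idx k i ↔ idx v / k = i := by simp [Ch]
lemma mem_Bl {v : V} {i : ℕ} : v ∈ Bl idx k i ↔ i < idx v / k := by simp [Bl]

lemma mem_Pcross {n : ℕ} {p : Finset V × Finset V} :
    p ∈ Pcross G idx k n ↔ ∃ i < n, ∃ s, (s.Nonempty ∧ s ⊆ Ch idx k i) ∧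
      p = (s, BS G idx k i s) ∧ (BS G idx k i s).Nonempty := by
  simp only [Pcross, mem_biUnion, mem_filter, mem_image, mem_range, mem_powerset]
  constructor
  · rintro ⟨i, hi, ⟨s, ⟨hs1, hs2⟩, rfl⟩, h2⟩
    exact ⟨i, hi, s, ⟨hs2, hs1⟩, rfl, h2⟩
  · rintro ⟨i, hi, s, ⟨hs1, hs2⟩, rfl, h2⟩
    exact ⟨i, hi, ⟨⟨s, ⟨hs2, hs1⟩, rfl⟩, h2⟩⟩

lemma shape (hk : 0 < k) {n : ℕ} {p : Finset V × Finset V} (hp : p ∈ Pall G idx k n)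
    {x y : V} (hx : x ∈ p.1) (hy : y ∈ p.2) :
    G.Adj x y ∧ idx x < idx y ∧ p = D G idx k x y := by
  rcases Finset.mem_union.mp hp with h | h
  · rcases (mem_Pcross G idx k).mp h with ⟨i, _, s, ⟨_, hsub⟩, rfl, _⟩
    simp only at hx hy
    have hyB : y ∈ Bl idx k i := (mem_filter.mp hy).1
    have hyS : Nb G idx k i y = s := (mem_filter.mp hy).2
    have hxi : idx x / k = i := (mem_Ch idx k).mp (hsub hx)
    have hyi : i < idx y / k := (mem_Bl idx k).mp hyB
    have hadj : G.Adj x y := by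
      have : x ∈ Nb G idx k i y := hyS ▸ hx
      have := Finset.mem_inter.mp this
      exact (G.mem_neighborFinset y x).mp this.1 |>.symm
    have hlt : idx x < idx y := by
      by_contra hcon
      push_neg at hcon
      exact absurd (Nat.div_le_div_right (c := k) hcon) (by omega)
    refine ⟨hadj, hlt, ?_⟩
    simp only [D, hxi, hyS]
    rw [if_neg (show ¬ i = idx y / k by omega)]
  · simp only [Psingle, mem_image, mem_filter] at h
    rcases h with ⟨⟨a, b⟩, ⟨-, hadj, hlt, hch⟩, heq⟩
    have hx1 : p.1 = {a} := by rw [← heq]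
    have hy1 : p.2 = {b} := by rw [← heq]
    rw [hx1, Finset.mem_singleton] at hx
    rw [hy1, Finset.mem_singleton] at hy
    subst hx; subst hy
    refine ⟨hadj, hlt, ?_⟩
    simp only [D, hch, if_true, ← heq]

lemma cover (hk : 0 < k) {n : ℕ} (hn : ∀ v, idx v < n) {x y : V} (hadj : G.Adj x y)
    (hlt : idx x < idx y) :
    D G idx k x y ∈ Pall G idx k n ∧ x ∈ (D G idx k x y).1 ∧ y ∈ (D G idx k x y).2 := by
  by_cases h : idx x / k = idx y / k
  · refine ⟨Finset.mem_union_right _ ?_, ?_, ?_⟩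
    · simp only [Psingle, mem_image, mem_filter]
      exact ⟨(x, y), ⟨mem_product.mpr ⟨mem_univ _, mem_univ _⟩, hadj, hlt, h⟩,
        by simp [D, h]⟩
    · simp [D, h]
    · simp [D, h]
  · set i := idx x / k with hi
    have hich : i < idx y / k := lt_of_le_of_ne (Nat.div_le_div_right hlt.le) h
    have hyB : y ∈ Bl idx k i := (mem_Bl idx k).mpr hich
    have hxN : x ∈ Nb G idx k i y :=
      Finset.mem_inter.mpr ⟨(G.mem_neighborFinset y x).mpr hadj.symm, (mem_Ch idx k).mpr rfl⟩
    have hyBS : y ∈ BS G idx k i (Nb G idx k i y) := mem_filter.mpr ⟨hyB, rfl⟩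
    refine ⟨Finset.mem_union_left _ ?_, ?_, ?_⟩
    · refine (mem_Pcross G idx k).mpr ⟨i, ?_, Nb G idx k i y, ⟨⟨x, hxN⟩,
        Finset.inter_subset_right⟩, ?_, ⟨y, hyBS⟩⟩
      · exact lt_of_le_of_lt (Nat.div_le_self _ _) (hn x)
      · exact if_neg h
    · rw [show D G idx k x y = (Nb G idx k i y, BS G idx k i (Nb G idx k i y)) from if_neg h]; exact hxN
    · rw [show D G idx k x y = (Nb G idx k i y, BS G idx k i (Nb G idx k i y)) from if_neg h]; exact hyBS

lemma valid (hk : 0 < k) {n : ℕ} {p : Finset V × Finset V} (hp : p ∈ Pall G idx k n) :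
    p.1.Nonempty ∧ p.2.Nonempty ∧ Disjoint p.1 p.2 ∧
      ∀ x ∈ p.1, ∀ y ∈ p.2, G.Adj x y := by
  have h1 : p.1.Nonempty ∧ p.2.Nonempty := by
    rcases Finset.mem_union.mp hp with h | h
    · rcases (mem_Pcross G idx k).mp h with ⟨i, _, s, ⟨hs, _⟩, rfl, h2⟩
      exact ⟨hs, h2⟩
    · simp only [Psingle, mem_image, mem_filter] at h
      rcases h with ⟨⟨a, b⟩, -, heq⟩
      constructor
      · rw [show p.1 = {a} by rw [← heq]]; exact singleton_nonempty _
      · rw [show p.2 = {b} by rw [← heq]]; exact singleton_nonempty _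
  refine ⟨h1.1, h1.2, ?_, fun x hx y hy => (shape G idx k hk hp hx hy).1⟩
  rw [Finset.disjoint_left]
  intro v hv1 hv2
  exact absurd (shape G idx k hk hp hv1 hv2).2.1 (lt_irrefl _)

lemma unique (hk : 0 < k) {n : ℕ} {p p' : Finset V × Finset V}
    (hp : p ∈ Pall G idx k n) (hp' : p' ∈ Pall G idx k n)
    {x y x' y' : V} (hx : x ∈ p.1) (hy : y ∈ p.2) (hx' : x' ∈ p'.1) (hy' : y' ∈ p'.2)
    (he : s(x, y) = s(x', y')) : p = p' := by
  obtain ⟨-, hlt, hD⟩ := shape G idx k hk hp hx hy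
  obtain ⟨-, hlt', hD'⟩ := shape G idx k hk hp' hx' hy'
  rw [Sym2.eq_iff] at he
  rcases he with ⟨rfl, rfl⟩ | ⟨rfl, rfl⟩
  · rw [hD, hD']
  · omega


lemma card_Ch_le (hk : 0 < k) (hinj : Function.Injective idx) (i : ℕ) :
    (Ch idx k i).card ≤ k := by
  have : (Ch idx k i).card ≤ (Finset.Ico (i * k) (i * k + k)).card := by
    apply Finset.card_le_card_of_injOn idx
    · intro v hv
      have hv' : idx v / k = i := (mem_Ch idx k).mp hv
      rw [Finset.mem_coe, Finset.mem_Ico]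
      constructor
      · calc i * k = idx v / k * k := by rw [hv']
          _ ≤ idx v := Nat.div_mul_le_self _ _
      · have h0 : idx v / k < i + 1 := by omega
        have h' := (Nat.div_lt_iff_lt_mul hk).mp h0
        rwa [Nat.succ_mul] at h'
    · exact fun a _ b _ h => hinj h
  simpa using this

lemma sum_Bl_card (hk : 0 < k) (hinj : Function.Injective idx) {n : ℕ} (hn : ∀ v, idx v < n) :
    ∑ i ∈ range n, (Bl idx k i).card ≤ ∑ j ∈ range n, j / k := by
  have h1 : ∀ i, (Bl idx k i).card = ∑ v : V, if i < idx v / k then 1 else 0 := by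
    intro i
    rw [Bl, Finset.card_filter]
  have h2 : ∑ i ∈ range n, (Bl idx k i).card = ∑ v : V, idx v / k := by
    simp only [h1]
    rw [Finset.sum_comm]
    refine Finset.sum_congr rfl fun v _ => ?_
    rw [← Finset.card_filter]
    have : Finset.filter (fun i => i < idx v / k) (range n) = range (idx v / k) := by
      ext j
      simp only [Finset.mem_filter, Finset.mem_range]
      have : idx v / k ≤ idx v := Nat.div_le_self _ _
      have := hn v
      omega
    rw [this, Finset.card_range]
  rw [h2]
  have h3 : ∑ j ∈ univ.image idx, j / k = ∑ v : V, idx v / k :=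
    Finset.sum_image (fun a _ b _ h => hinj h)
  rw [← h3]
  apply Finset.sum_le_sum_of_subset
  intro j hj
  rcases Finset.mem_image.mp hj with ⟨v, -, rfl⟩
  exact Finset.mem_range.mpr (hn v)


lemma sum_Psingle (hk : 0 < k) (hinj : Function.Injective idx) {n : ℕ} (hn : ∀ v, idx v < n) :
    ∑ p ∈ Psingle G idx k, (p.1.card + p.2.card) ≤ 2 * (k * n) := by
  classical
  set src := ((univ ×ˢ univ).filter fun p : V × V =>
      G.Adj p.1 p.2 ∧ idx p.1 < idx p.2 ∧ idx p.1 / k = idx p.2 / k) with hsrc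
  have hinjf : ∀ x ∈ src, ∀ y ∈ src,
      ((({x.1} : Finset V), ({x.2} : Finset V)) = (({y.1} : Finset V), ({y.2} : Finset V))) → x = y := by
    rintro ⟨a, b⟩ - ⟨c, d⟩ - h
    have h1 : ({a} : Finset V) = {c} := congrArg Prod.fst h
    have h2 : ({b} : Finset V) = {d} := congrArg Prod.snd h
    rw [Finset.singleton_inj] at h1 h2
    simp [h1, h2]
  have hsum : ∑ p ∈ Psingle G idx k, (p.1.card + p.2.card)
      = ∑ x ∈ src, ((({x.1} : Finset V)).card + (({x.2} : Finset V)).card) := by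
    rw [Psingle, ← hsrc, Finset.sum_image hinjf]
  rw [hsum]
  have : ∑ x ∈ src, ((({x.1} : Finset V)).card + (({x.2} : Finset V)).card) = 2 * src.card := by
    simp [Finset.sum_const, two_mul, mul_two]
  rw [this]
  have hcard : src.card ≤ k * n := by
    have h1 : src.card ≤ k * (src.image Prod.snd).card := by
      apply Finset.card_le_mul_card_image src k
      intro b hb
      have : (Finset.filter (fun a => a.2 = b) src).card ≤ (Ch idx k (idx b / k)).card := by
        apply Finset.card_le_card_of_injOn Prod.fst
        · rintro ⟨p1, p2⟩ hp
          rw [Finset.mem_coe, Finset.mem_filter] at hp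
          obtain ⟨hp1, hp2⟩ := hp
          rw [hsrc, Finset.mem_filter] at hp1
          rcases hp1 with ⟨-, -, -, hch⟩
          simp only at hp2
          subst hp2
          exact (mem_Ch idx k).mpr hch
        · rintro ⟨p1, p2⟩ hp ⟨q1, q2⟩ hq h
          rw [Finset.mem_coe, Finset.mem_filter] at hp hq
          simp only at h hp hq
          rw [h, hp.2, hq.2]
      calc (Finset.filter (fun a => a.2 = b) src).card
          ≤ (Ch idx k (idx b / k)).card := this
        _ ≤ k := card_Ch_le idx k hk hinj _
    have h2 : (src.image Prod.snd).card ≤ n := by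
      calc (src.image Prod.snd).card ≤ (univ : Finset V).card := Finset.card_le_card (by simp)
        _ ≤ n := by
            have h3 : (univ : Finset V).card ≤ (range n).card :=
              Finset.card_le_card_of_injOn (s := univ) (t := range n) idx
                (fun v _ => Finset.mem_range.mpr (hn v)) (fun a _ b _ h => hinj h)
            simpa using h3
    calc src.card ≤ k * (src.image Prod.snd).card := h1
      _ ≤ k * n := Nat.mul_le_mul_left k h2
  omega

lemma sum_Pcross (hk : 0 < k) (hinj : Function.Injective idx) {n : ℕ} (hn : ∀ v, idx v < n) :
    ∑ p ∈ Pcross G idx k n, (p.1.card + p.2.card) ≤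
      n * (2 ^ k * k) + ∑ j ∈ range n, j / k := by
  classical
  set inner : ℕ → Finset (Finset V × Finset V) := fun i =>
    (((Ch idx k i).powerset.filter Finset.Nonempty).image fun s => (s, BS G idx k i s)).filter
      fun p => p.2.Nonempty with hinner
  have hmem : ∀ i, ∀ p ∈ inner i, p.1.Nonempty ∧ p.1 ⊆ Ch idx k i := by
    intro i p hp
    rw [hinner] at hp
    simp only [Finset.mem_filter, Finset.mem_image, Finset.mem_powerset] at hp
    rcases hp with ⟨⟨s, ⟨hs1, hs2⟩, rfl⟩, -⟩
    exact ⟨hs2, hs1⟩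
  have hdisj : (↑(range n) : Set ℕ).PairwiseDisjoint inner := by
    intro i _ j _ hij
    simp only [Function.onFun]
    rw [Finset.disjoint_left]
    intro p hpi hpj
    obtain ⟨⟨x, hx⟩, hsub⟩ := hmem i p hpi
    obtain ⟨-, hsub'⟩ := hmem j p hpj
    have h1 := (mem_Ch idx k).mp (hsub hx)
    have h2 := (mem_Ch idx k).mp (hsub' hx)
    exact hij (h1 ▸ h2)
  have hsplit : ∑ p ∈ Pcross G idx k n, (p.1.card + p.2.card)
      = ∑ i ∈ range n, ∑ p ∈ inner i, (p.1.card + p.2.card) := by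
    rw [Pcross, Finset.sum_biUnion hdisj]
  rw [hsplit]
  have hper : ∀ i, ∑ p ∈ inner i, (p.1.card + p.2.card) ≤ 2 ^ k * k + (Bl idx k i).card := by
    intro i
    have step1 : ∑ p ∈ inner i, (p.1.card + p.2.card)
        ≤ ∑ p ∈ (((Ch idx k i).powerset.filter Finset.Nonempty).image
            fun s => (s, BS G idx k i s)), (p.1.card + p.2.card) :=
      Finset.sum_le_sum_of_subset (Finset.filter_subset _ _)
    have step2 : ∑ p ∈ (((Ch idx k i).powerset.filter Finset.Nonempty).image
            fun s => (s, BS G idx k i s)), (p.1.card + p.2.card)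
        = ∑ s ∈ (Ch idx k i).powerset.filter Finset.Nonempty,
            (s.card + (BS G idx k i s).card) := by
      apply Finset.sum_image
      intro a _ b _ h
      exact congrArg Prod.fst h
    have step3 : ∑ s ∈ (Ch idx k i).powerset.filter Finset.Nonempty,
            (s.card + (BS G idx k i s).card)
        ≤ ∑ s ∈ (Ch idx k i).powerset, (s.card + (BS G idx k i s).card) :=
      Finset.sum_le_sum_of_subset (Finset.filter_subset _ _)
    have step4 : ∑ s ∈ (Ch idx k i).powerset, s.card ≤ 2 ^ k * k := by
      have h1 : ∑ s ∈ (Ch idx k i).powerset, s.card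
          ≤ (Ch idx k i).powerset.card • (Ch idx k i).card :=
        Finset.sum_le_card_nsmul _ _ _ fun s hs =>
          Finset.card_le_card (Finset.mem_powerset.mp hs)
      rw [Finset.card_powerset, smul_eq_mul] at h1
      calc ∑ s ∈ (Ch idx k i).powerset, s.card
          ≤ 2 ^ (Ch idx k i).card * (Ch idx k i).card := h1
        _ ≤ 2 ^ k * k := Nat.mul_le_mul (Nat.pow_le_pow_right (by norm_num)
            (card_Ch_le idx k hk hinj i)) (card_Ch_le idx k hk hinj i)
    have step5 : ∑ s ∈ (Ch idx k i).powerset, (BS G idx k i s).card = (Bl idx k i).card := by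
      symm
      apply Finset.card_eq_sum_card_fiberwise (f := Nb G idx k i)
      intro y hy
      exact Finset.mem_powerset.mpr Finset.inter_subset_right
    calc ∑ p ∈ inner i, (p.1.card + p.2.card)
        ≤ ∑ s ∈ (Ch idx k i).powerset, (s.card + (BS G idx k i s).card) :=
          le_trans step1 (step2 ▸ step3)
      _ = (∑ s ∈ (Ch idx k i).powerset, s.card)
          + ∑ s ∈ (Ch idx k i).powerset, (BS G idx k i s).card := Finset.sum_add_distrib
      _ ≤ 2 ^ k * k + (Bl idx k i).card := by rw [step5]; omega
  calc ∑ i ∈ range n, ∑ p ∈ inner i, (p.1.card + p.2.card)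
      ≤ ∑ i ∈ range n, (2 ^ k * k + (Bl idx k i).card) := Finset.sum_le_sum fun i _ => hper i
    _ = n * (2 ^ k * k) + ∑ i ∈ range n, (Bl idx k i).card := by
        rw [Finset.sum_add_distrib, Finset.sum_const, Finset.card_range, smul_eq_mul]
    _ ≤ n * (2 ^ k * k) + ∑ j ∈ range n, j / k := by
        have := sum_Bl_card idx k hk hinj hn
        omega

lemma cost (hk : 0 < k) (hinj : Function.Injective idx) {n : ℕ} (hn : ∀ v, idx v < n) :
    ∑ p ∈ Pall G idx k n, (p.1.card + p.2.card) ≤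
      (∑ j ∈ range n, j / k) + n * (2 ^ k * k) + 2 * (k * n) := by
  have hU : ∑ p ∈ Pall G idx k n, (p.1.card + p.2.card)
      ≤ ∑ p ∈ Pcross G idx k n, (p.1.card + p.2.card)
        + ∑ p ∈ Psingle G idx k, (p.1.card + p.2.card) := by
    rw [Pall, ← Finset.union_sdiff_self_eq_union, Finset.sum_union Finset.sdiff_disjoint.symm]
    exact Nat.add_le_add_left (Finset.sum_le_sum_of_subset Finset.sdiff_subset) _
  have h1 := sum_Pcross G idx k hk hinj hn
  have h2 := sum_Psingle G idx k hk hinj hn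
  omega


lemma decomp (hk : 0 < k) (hinj : Function.Injective idx) {n : ℕ} (hn : ∀ v, idx v < n) :
    ∃ (q : ℕ) (Xs Ys : Fin q → Finset V),
      (∀ i, (Xs i).Nonempty ∧ (Ys i).Nonempty ∧ Disjoint (Xs i) (Ys i) ∧
        ∀ x ∈ Xs i, ∀ y ∈ Ys i, G.Adj x y) ∧
      (∀ i j, i ≠ j →
        Disjoint ((Xs i ×ˢ Ys i).image fun p => s(p.1, p.2))
          ((Xs j ×ˢ Ys j).image fun p => s(p.1, p.2))) ∧
      Finset.univ.biUnion (fun i => (Xs i ×ˢ Ys i).image fun p => s(p.1, p.2)) =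
        G.edgeFinset ∧
      (∑ i, ((Xs i).card + (Ys i).card)) ≤
        (∑ j ∈ range n, j / k) + n * (2 ^ k * k) + 2 * (k * n) := by
  classical
  set P := Pall G idx k n with hP
  set eqv := P.equivFin with heqv
  refine ⟨P.card, fun i => ((eqv.symm i : {x // x ∈ P}) : Finset V × Finset V).1,
    fun i => ((eqv.symm i : {x // x ∈ P}) : Finset V × Finset V).2, ?_, ?_, ?_, ?_⟩
  · intro i
    exact valid G idx k hk (eqv.symm i).2
  · intro i j hij
    rw [Finset.disjoint_left]
    intro e hei hej
    rcases Finset.mem_image.mp hei with ⟨⟨a, b⟩, hab, he1⟩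
    rcases Finset.mem_image.mp hej with ⟨⟨c, d⟩, hcd, he2⟩
    rw [Finset.mem_product] at hab hcd
    have heq : ((eqv.symm i : {x // x ∈ P}) : Finset V × Finset V)
        = ((eqv.symm j : {x // x ∈ P}) : Finset V × Finset V) :=
      unique G idx k hk (eqv.symm i).2 (eqv.symm j).2 hab.1 hab.2 hcd.1 hcd.2
        (by rw [he1, he2])
    exact hij (eqv.symm.injective (Subtype.ext heq))
  · ext e
    simp only [Finset.mem_biUnion, Finset.mem_univ, true_and]
    constructor
    · rintro ⟨i, himg⟩
      rcases Finset.mem_image.mp himg with ⟨⟨a, b⟩, hab, rfl⟩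
      rw [Finset.mem_product] at hab
      have hadj : G.Adj a b :=
        (valid G idx k hk (eqv.symm i).2).2.2.2 a hab.1 b hab.2
      rw [SimpleGraph.mem_edgeFinset]
      exact hadj
    · intro he
      induction e with
      | _ a b =>
        rw [SimpleGraph.mem_edgeFinset, SimpleGraph.mem_edgeSet] at he
        have hne : idx a ≠ idx b := fun h => G.ne_of_adj he (hinj h)
        rcases Nat.lt_or_ge (idx a) (idx b) with hlt | hge
        · obtain ⟨hp, hx, hy⟩ := cover G idx k hk hn he hlt
          refine ⟨eqv ⟨_, hp⟩, Finset.mem_image.mpr ⟨(a, b), ?_, rfl⟩⟩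
          rw [Equiv.symm_apply_apply]
          exact Finset.mem_product.mpr ⟨hx, hy⟩
        · have hlt : idx b < idx a := by omega
          obtain ⟨hp, hx, hy⟩ := cover G idx k hk hn he.symm hlt
          refine ⟨eqv ⟨_, hp⟩, Finset.mem_image.mpr ⟨(b, a), ?_, Sym2.eq_swap⟩⟩
          rw [Equiv.symm_apply_apply]
          exact Finset.mem_product.mpr ⟨hx, hy⟩
  · have h1 : ∑ i : Fin P.card, (((eqv.symm i : {x // x ∈ P}) : Finset V × Finset V).1.card
        + ((eqv.symm i : {x // x ∈ P}) : Finset V × Finset V).2.card)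
        = ∑ x : {x // x ∈ P}, ((x : Finset V × Finset V).1.card
            + (x : Finset V × Finset V).2.card) :=
      Equiv.sum_comp eqv.symm (fun x : {x // x ∈ P} =>
        (x : Finset V × Finset V).1.card + (x : Finset V × Finset V).2.card)
    rw [h1, Finset.sum_coe_sort P (fun p => p.1.card + p.2.card)]
    exact cost G idx k hk hinj hn

end CES

set_option maxHeartbeats 1000000 in
/-- The Chung–Erdős–Spencer theorem: for every `ε > 0` there is `n₀` such that every
simple graph on `n ≥ n₀` vertices has a biclique decomposition `(X₁,Y₁), …, (X_q,Y_q)`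
with `∑ᵢ(|Xᵢ| + |Yᵢ|) ≤ (1+ε) n² / (2 ln n)`. -/
theorem chung_erdos_spencer (ε : ℝ) (hε : 0 < ε) :
    ∃ n₀ : ℕ, ∀ n : ℕ, n₀ ≤ n →
      ∀ (V : Type) (_ : Fintype V) (_ : DecidableEq V)
        (G : SimpleGraph V) (_ : DecidableRel G.Adj),
        Fintype.card V = n →
        ∃ (q : ℕ) (Xs Ys : Fin q → Finset V),
          (∀ i, (Xs i).Nonempty ∧ (Ys i).Nonempty ∧ Disjoint (Xs i) (Ys i) ∧
            ∀ x ∈ Xs i, ∀ y ∈ Ys i, G.Adj x y) ∧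
          (∀ i j, i ≠ j →
            Disjoint ((Xs i ×ˢ Ys i).image fun p => s(p.1, p.2))
              ((Xs j ×ˢ Ys j).image fun p => s(p.1, p.2))) ∧
          Finset.univ.biUnion (fun i => (Xs i ×ˢ Ys i).image fun p => s(p.1, p.2)) =
            G.edgeFinset ∧
          ((∑ i, ((Xs i).card + (Ys i).card) : ℕ) : ℝ) ≤
            (1 + ε) * n ^ 2 / (2 * Real.log n) := by
  classical
  refine ⟨max 3 ⌈(4096 / ε) ^ (8 : ℕ)⌉₊, fun n hn V iV dV G dG hcard => ?_⟩
  have hn3 : 3 ≤ n := le_trans (le_max_left _ _) hn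
  have hN0 : (0:ℝ) < n := by exact_mod_cast lt_of_lt_of_le (by norm_num) hn3
  have hN1 : (1:ℝ) ≤ n := by exact_mod_cast le_trans (by norm_num) hn3
  set eqv0 := Fintype.equivFinOfCardEq hcard with heqv0
  set idx : V → ℕ := fun v => (eqv0 v : ℕ) with hidx
  have hinj : Function.Injective idx := fun a b h => eqv0.injective (Fin.val_injective h)
  have hnlt : ∀ v, idx v < n := fun v => (eqv0 v).2
  set L := Real.log n with hL
  have hL1 : 1 ≤ L := by
    rw [hL, Real.le_log_iff_exp_le hN0]
    calc Real.exp 1 ≤ 2.7182818286 := le_of_lt Real.exp_one_lt_d9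
      _ ≤ 3 := by norm_num
      _ ≤ (n:ℝ) := by exact_mod_cast hn3
  set k := ⌈L⌉₊ with hk
  have hkL : L ≤ (k:ℝ) := Nat.le_ceil L
  have hk0 : 0 < k := Nat.ceil_pos.mpr (by linarith)
  have hkU : (k:ℝ) ≤ L + 1 := le_of_lt (Nat.ceil_lt_add_one (by linarith))
  obtain ⟨q, Xs, Ys, hval, hdisj, hunion, hcost⟩ := CES.decomp G idx k hk0 hinj hnlt
  refine ⟨q, Xs, Ys, hval, hdisj, hunion, ?_⟩
  -- pass to real numbers
  have hcostR : ((∑ i, ((Xs i).card + (Ys i).card) : ℕ) : ℝ) ≤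
      ((∑ j ∈ Finset.range n, j / k : ℕ) : ℝ) + (n:ℝ) * ((2:ℝ)^k * k) + 2 * ((k:ℝ) * n) := by
    have h := hcost
    have h' : ((∑ i, ((Xs i).card + (Ys i).card) : ℕ) : ℝ) ≤
        (((∑ j ∈ Finset.range n, j / k) + n * (2 ^ k * k) + 2 * (k * n) : ℕ) : ℝ) :=
      Nat.cast_le.mpr h
    calc ((∑ i, ((Xs i).card + (Ys i).card) : ℕ) : ℝ)
        ≤ (((∑ j ∈ Finset.range n, j / k) + n * (2 ^ k * k) + 2 * (k * n) : ℕ) : ℝ) := h'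
      _ = ((∑ j ∈ Finset.range n, j / k : ℕ) : ℝ) + (n:ℝ) * ((2:ℝ)^k * k) + 2 * ((k:ℝ) * n) := by
          push_cast; ring
  -- the main term
  have hA : ((∑ j ∈ Finset.range n, j / k : ℕ) : ℝ) ≤ (n:ℝ)^2 / (2 * L) := by
    have h1 : ((∑ j ∈ Finset.range n, j / k : ℕ) : ℝ) ≤ ∑ j ∈ Finset.range n, (j:ℝ) / k := by
      push_cast
      exact Finset.sum_le_sum fun j _ => Nat.cast_div_le
    have h2 : ∑ j ∈ Finset.range n, (j:ℝ) = (n:ℝ) * ((n:ℝ) - 1) / 2 := by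
      have h3 := Finset.sum_range_id_mul_two n
      have h4 : ((∑ i ∈ Finset.range n, i : ℕ) : ℝ) * 2 = (n:ℝ) * ((n:ℝ) - 1) := by
        rw [show ((∑ i ∈ Finset.range n, i : ℕ) : ℝ) * 2 = (((∑ i ∈ Finset.range n, i) * 2 : ℕ) : ℝ) by push_cast; ring,
          h3]
        have : 1 ≤ n := by omega
        push_cast [Nat.cast_sub this]
        ring
      have h5 : ((∑ i ∈ Finset.range n, i : ℕ) : ℝ) = ∑ j ∈ Finset.range n, (j:ℝ) := by push_cast; rfl
      linarith [h4, h5.symm ▸ h4]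
    have h6 : ∑ j ∈ Finset.range n, (j:ℝ) / k = (∑ j ∈ Finset.range n, (j:ℝ)) / k := by
      rw [Finset.sum_div]
    have hk0R : (0:ℝ) < k := by positivity
    calc ((∑ j ∈ Finset.range n, j / k : ℕ) : ℝ)
        ≤ (∑ j ∈ Finset.range n, (j:ℝ)) / k := by rw [← h6]; exact h1
      _ = (n:ℝ) * ((n:ℝ) - 1) / (2 * k) := by rw [h2]; ring
      _ ≤ (n:ℝ)^2 / (2 * L) := by
          apply div_le_div₀ (by positivity) (by nlinarith) (by positivity) (by linarith)
  -- the error term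
  have h2k : ((2:ℝ))^k ≤ 2 * (n:ℝ) ^ ((3:ℝ)/4) := by
    have e1 : ((2:ℝ))^k = (2:ℝ) ^ ((k:ℝ)) := (Real.rpow_natCast 2 k).symm
    have e2 : (2:ℝ) ^ ((k:ℝ)) ≤ (2:ℝ) ^ (L + 1) :=
      Real.rpow_le_rpow_of_exponent_le one_le_two (by linarith)
    have e3 : (2:ℝ) ^ (L + 1) = 2 * (2:ℝ)^L := by
      rw [Real.rpow_add (by norm_num : (0:ℝ) < 2), Real.rpow_one]; ring
    have e4 : (2:ℝ)^L = Real.exp (Real.log 2 * L) := by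
      rw [Real.rpow_def_of_pos (by norm_num : (0:ℝ) < 2)]
    have e5 : Real.exp (Real.log 2 * L) ≤ Real.exp (3/4 * L) := by
      apply Real.exp_le_exp.mpr
      have hlog2 : Real.log 2 ≤ 3/4 := le_of_lt (lt_of_lt_of_le Real.log_two_lt_d9 (by norm_num))
      nlinarith
    have e6 : Real.exp (3/4 * L) = (n:ℝ) ^ ((3:ℝ)/4) := by
      rw [Real.rpow_def_of_pos hN0, mul_comm]
    calc ((2:ℝ))^k = (2:ℝ) ^ ((k:ℝ)) := e1
      _ ≤ (2:ℝ) ^ (L + 1) := e2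
      _ = 2 * (2:ℝ)^L := e3
      _ = 2 * Real.exp (Real.log 2 * L) := by rw [e4]
      _ ≤ 2 * Real.exp (3/4 * L) := by linarith
      _ = 2 * (n:ℝ) ^ ((3:ℝ)/4) := by rw [e6]
  have hsplit74 : (n:ℝ) * (n:ℝ)^((3:ℝ)/4) = (n:ℝ)^((7:ℝ)/4) := by
    rw [show (7:ℝ)/4 = 1 + 3/4 by norm_num, Real.rpow_add hN0, Real.rpow_one]
  have hn74 : (n:ℝ) ≤ (n:ℝ)^((7:ℝ)/4) := by
    calc (n:ℝ) = (n:ℝ)^((1:ℝ)) := (Real.rpow_one _).symm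
      _ ≤ (n:ℝ)^((7:ℝ)/4) := Real.rpow_le_rpow_of_exponent_le hN1 (by norm_num)
  have hkk : (k:ℝ) ≤ 2 * L := by linarith
  have hB : (n:ℝ) * ((2:ℝ)^k * k) + 2 * ((k:ℝ) * n) ≤ 8 * L * (n:ℝ)^((7:ℝ)/4) := by
    have t1 : (n:ℝ) * ((2:ℝ)^k * k) ≤ (n:ℝ) * ((2 * (n:ℝ)^((3:ℝ)/4)) * (2 * L)) := by
      apply mul_le_mul_of_nonneg_left _ (le_of_lt hN0)
      apply mul_le_mul h2k hkk (by positivity) (by positivity)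
    have t2 : 2 * ((k:ℝ) * n) ≤ 2 * ((2 * L) * n) := by
      apply mul_le_mul_of_nonneg_left _ (by norm_num)
      exact mul_le_mul_of_nonneg_right hkk (le_of_lt hN0)
    have t3 : (n:ℝ) * ((2 * (n:ℝ)^((3:ℝ)/4)) * (2 * L)) = 4 * L * ((n:ℝ) * (n:ℝ)^((3:ℝ)/4)) := by
      ring
    have t4 : 2 * ((2 * L) * (n:ℝ)) = 4 * L * n := by ring
    have t5 : 4 * L * (n:ℝ) ≤ 4 * L * (n:ℝ)^((7:ℝ)/4) :=
      mul_le_mul_of_nonneg_left hn74 (by linarith)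
    calc (n:ℝ) * ((2:ℝ)^k * k) + 2 * ((k:ℝ) * n)
        ≤ 4 * L * ((n:ℝ) * (n:ℝ)^((3:ℝ)/4)) + 4 * L * n := by
          rw [← t3, ← t4]; linarith
      _ = 4 * L * (n:ℝ)^((7:ℝ)/4) + 4 * L * n := by rw [hsplit74]
      _ ≤ 4 * L * (n:ℝ)^((7:ℝ)/4) + 4 * L * (n:ℝ)^((7:ℝ)/4) := by linarith
      _ = 8 * L * (n:ℝ)^((7:ℝ)/4) := by ring
  -- the epsilon room
  have hNbig : ((4096/ε) ^ (8:ℕ) : ℝ) ≤ (n:ℝ) := by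
    have h := le_trans (le_max_right 3 ⌈(4096 / ε) ^ (8 : ℕ)⌉₊) hn
    calc ((4096/ε) ^ (8:ℕ) : ℝ) ≤ (⌈(4096/ε) ^ (8:ℕ)⌉₊ : ℝ) := Nat.le_ceil _
      _ ≤ (n:ℝ) := Nat.cast_le.mpr h
  have hc8 : 4096/ε ≤ (n:ℝ)^((1:ℝ)/8) := by
    have hc0 : (0:ℝ) ≤ 4096/ε := by positivity
    have h := Real.rpow_le_rpow (by positivity) hNbig (by norm_num : (0:ℝ) ≤ 1/8)
    rwa [← Real.rpow_natCast (4096/ε) 8, ← Real.rpow_mul hc0,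
      show ((8:ℕ):ℝ) * (1/8) = 1 by norm_num, Real.rpow_one] at h
  have hlogle : L ≤ 16 * (n:ℝ)^((1:ℝ)/16) := by
    have h := Real.log_le_rpow_div (le_of_lt hN0) (show (0:ℝ) < 1/16 by norm_num)
    have h2 : (n:ℝ)^((1:ℝ)/16) / (1/16) = 16 * (n:ℝ)^((1:ℝ)/16) := by ring
    rw [hL]
    calc Real.log n ≤ (n:ℝ)^((1:ℝ)/16) / (1/16) := h
      _ = 16 * (n:ℝ)^((1:ℝ)/16) := h2
  have hL2 : L^2 ≤ 256 * (n:ℝ)^((1:ℝ)/8) := by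
    have hsq : ((n:ℝ)^((1:ℝ)/16))^(2:ℕ) = (n:ℝ)^((1:ℝ)/8) := by
      rw [← Real.rpow_natCast ((n:ℝ)^((1:ℝ)/16)) 2, ← Real.rpow_mul (le_of_lt hN0)]
      norm_num
    have hnn : (0:ℝ) ≤ (n:ℝ)^((1:ℝ)/16) := Real.rpow_nonneg (le_of_lt hN0) _
    nlinarith [hlogle, hL1, hnn, hsq]
  have hn2split : (n:ℝ)^2 = (n:ℝ)^((1:ℝ)/8) * ((n:ℝ)^((1:ℝ)/8) * (n:ℝ)^((7:ℝ)/4)) := by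
    rw [← Real.rpow_add hN0, ← Real.rpow_add hN0, ← Real.rpow_natCast (n:ℝ) 2]
    norm_num
  have hkey : 8 * L * (n:ℝ)^((7:ℝ)/4) ≤ ε * (n:ℝ)^2 / (2*L) := by
    rw [le_div_iff₀ (by positivity : (0:ℝ) < 2*L)]
    have h18 : (0:ℝ) ≤ (n:ℝ)^((1:ℝ)/8) := Real.rpow_nonneg (le_of_lt hN0) _
    have h74 : (0:ℝ) ≤ (n:ℝ)^((7:ℝ)/4) := Real.rpow_nonneg (le_of_lt hN0) _
    have h1 : 16 * L^2 ≤ 4096 * (n:ℝ)^((1:ℝ)/8) := by nlinarith [hL2]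
    have h2 : 4096 ≤ ε * (n:ℝ)^((1:ℝ)/8) := by
      rw [div_le_iff₀ hε] at hc8
      linarith [hc8]
    calc 8 * L * (n:ℝ)^((7:ℝ)/4) * (2*L) = (16 * L^2) * (n:ℝ)^((7:ℝ)/4) := by ring
      _ ≤ (4096 * (n:ℝ)^((1:ℝ)/8)) * (n:ℝ)^((7:ℝ)/4) :=
          mul_le_mul_of_nonneg_right h1 h74
      _ ≤ ((ε * (n:ℝ)^((1:ℝ)/8)) * (n:ℝ)^((1:ℝ)/8)) * (n:ℝ)^((7:ℝ)/4) := by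
          have := mul_le_mul_of_nonneg_right h2 h18
          exact mul_le_mul_of_nonneg_right this h74
      _ = ε * (n:ℝ)^2 := by rw [hn2split]; ring
  calc ((∑ i, ((Xs i).card + (Ys i).card) : ℕ) : ℝ)
      ≤ ((∑ j ∈ Finset.range n, j / k : ℕ) : ℝ) + ((n:ℝ) * ((2:ℝ)^k * k) + 2 * ((k:ℝ) * n)) := by
        linarith [hcostR]
    _ ≤ (n:ℝ)^2 / (2 * L) + ε * (n:ℝ)^2 / (2*L) := by
        have := le_trans hB hkey
        linarith [hA]
    _ = (1 + ε) * (n:ℝ)^2 / (2 * L) := by ring
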